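/- arXiv:2107.03654 — 2 statements merged into one kernel-verified Lean document; each statement's English description precedes it below -/
import Mathlib

section
/- Let $X,Y,Z,\gamma,\eta$ be non-negative functions on $[0,T]$, with $X$ and $Y$ absolutely continuous, $Z$ measurable, $\gamma$ and $\eta$ integrable over $[0,T]$, and let $A>0$ be a constant. Suppose that for almost every $t\in[0,T]$: $\frac{d}{dt}X(t)\le A Z^{1/2}(t)$ and $\frac{d}{dt}Y(t)+Z(t)\le \gamma(t)Y(t)+\eta(t)X^2(t)$, and that $X(0)=0$. Then for every $t\in[0,T]$: $X(t)\le A\,Y^{1/2}(0)\,t^{1/2}\,e^{\frac12\int_0^t(\gamma(s)+A^2 s\,\eta(s))\,ds}$ and $Y(t)+\int_0^t Z(s)\,ds\le Y(0)\,e^{\int_0^t(\gamma(s)+A^2 s\,\eta(s))\,ds}$. -/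
open MeasureTheory Real Filter



lemma tri_swap {t : ℝ} {f h : ℝ → ℝ}
    (hf : IntegrableOn f (Set.Ioc 0 t)) (hh : IntegrableOn h (Set.Ioc 0 t)) :
    ∫ s in Set.Ioc (0:ℝ) t, f s * ∫ u in Set.Ioc (0:ℝ) s, h u
      = ∫ u in Set.Ioc (0:ℝ) t, (∫ s in Set.Ioc u t, f s) * h u := by
  set μ := volume.restrict (Set.Ioc (0:ℝ) t) with hμ
  have hS : MeasurableSet {p : ℝ × ℝ | p.2 ≤ p.1} :=
    (isClosed_le continuous_snd continuous_fst).measurableSet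
  have hprod : Integrable (fun p : ℝ × ℝ => f p.1 * h p.2) (μ.prod μ) :=
    hf.mul_prod hh
  have hFint : Integrable
      (Set.indicator {p : ℝ × ℝ | p.2 ≤ p.1} (fun p => f p.1 * h p.2)) (μ.prod μ) :=
    hprod.indicator hS
  have key := integral_integral_swap
    (f := fun s u => Set.indicator {p : ℝ × ℝ | p.2 ≤ p.1}
      (fun p => f p.1 * h p.2) (s, u)) (μ := μ) (ν := μ) hFint
  have hL : (∫ s, ∫ u, Set.indicator {p : ℝ × ℝ | p.2 ≤ p.1}
      (fun p => f p.1 * h p.2) (s, u) ∂μ ∂μ)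
      = ∫ s in Set.Ioc (0:ℝ) t, f s * ∫ u in Set.Ioc (0:ℝ) s, h u := by
    rw [hμ]
    refine integral_congr_ae ?_
    filter_upwards [ae_restrict_mem measurableSet_Ioc] with s hs
    have h1 : (fun u => Set.indicator {p : ℝ × ℝ | p.2 ≤ p.1}
        (fun p => f p.1 * h p.2) (s, u))
        = Set.indicator (Set.Iic s) (fun u => f s * h u) := by
      ext u
      simp [Set.indicator_apply, Set.mem_Iic, Set.mem_setOf_eq]
    rw [h1, integral_indicator measurableSet_Iic,
      Measure.restrict_restrict measurableSet_Iic]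
    have h2 : Set.Iic s ∩ Set.Ioc 0 t = Set.Ioc 0 s := by
      ext x
      simp only [Set.mem_inter_iff, Set.mem_Iic, Set.mem_Ioc]
      exact ⟨fun ⟨h1, h2, _⟩ => ⟨h2, h1⟩, fun ⟨h1, h2⟩ => ⟨h2, h1, h2.trans hs.2⟩⟩
    rw [h2, integral_const_mul]
  have hR : (∫ u, ∫ s, Set.indicator {p : ℝ × ℝ | p.2 ≤ p.1}
      (fun p => f p.1 * h p.2) (s, u) ∂μ ∂μ)
      = ∫ u in Set.Ioc (0:ℝ) t, (∫ s in Set.Ioc u t, f s) * h u := by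
    rw [hμ]
    refine integral_congr_ae ?_
    filter_upwards [ae_restrict_mem measurableSet_Ioc] with u hu
    have h1 : (fun s => Set.indicator {p : ℝ × ℝ | p.2 ≤ p.1}
        (fun p => f p.1 * h p.2) (s, u))
        = Set.indicator (Set.Ici u) (fun s => f s * h u) := by
      ext s
      simp [Set.indicator_apply, Set.mem_Ici, Set.mem_setOf_eq]
    rw [h1, integral_indicator measurableSet_Ici,
      Measure.restrict_restrict measurableSet_Ici]
    have h2 : Set.Ici u ∩ Set.Ioc 0 t = Set.Icc u t := by
      ext x
      simp only [Set.mem_inter_iff, Set.mem_Ici, Set.mem_Ioc, Set.mem_Icc]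
      exact ⟨fun ⟨h1, _, h3⟩ => ⟨h1, h3⟩, fun ⟨h1, h2⟩ => ⟨h1, lt_of_lt_of_le hu.1 h1, h2⟩⟩
    rw [h2, integral_Icc_eq_integral_Ioc, integral_mul_const]
  rw [← hL, key, hR]


lemma primitive_pow_identity (T : ℝ) (hT : 0 ≤ T) (g : ℝ → ℝ)
    (hgi : IntervalIntegrable g volume 0 T) :
    ∀ (k : ℕ), ∀ t ∈ Set.Icc (0:ℝ) T,
      ∫ s in (0:ℝ)..t, g s * (∫ u in (0:ℝ)..s, g u) ^ k
        = (∫ s in (0:ℝ)..t, g s) ^ (k + 1) / (k + 1) := by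
  have hGc : ContinuousOn (fun x => ∫ u in (0:ℝ)..x, g u) (Set.Icc 0 T) := by
    have := intervalIntegral.continuousOn_primitive_interval' hgi
      (Set.left_mem_uIcc : (0:ℝ) ∈ Set.uIcc 0 T)
    rwa [Set.uIcc_of_le hT] at this
  have hsub : ∀ t ∈ Set.Icc (0:ℝ) T, ∀ u ∈ Set.Icc (0:ℝ) t,
      Set.uIcc u t ⊆ Set.uIcc (0:ℝ) T := by
    intro t ht u hu
    rw [Set.uIcc_of_le hu.2, Set.uIcc_of_le hT]
    exact Set.Icc_subset_Icc hu.1 ht.2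
  have hfk : ∀ k : ℕ, IntervalIntegrable
      (fun s => g s * (∫ u in (0:ℝ)..s, g u) ^ k) volume 0 T := by
    intro k
    refine hgi.mul_continuousOn ?_
    rw [Set.uIcc_of_le hT]
    exact hGc.pow k
  intro k
  induction k with
  | zero =>
    intro t ht
    simp
  | succ k ih =>
    intro t ht
    have ht0 : (0:ℝ) ≤ t := ht.1
    -- integrable on pieces
    have hfkt : ∀ u ∈ Set.Icc (0:ℝ) t, IntervalIntegrable
        (fun s => g s * (∫ v in (0:ℝ)..s, g v) ^ k) volume u t :=
      fun u hu => (hfk k).mono_set (hsub t ht u hu)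
    have hfk0 : ∀ u ∈ Set.Icc (0:ℝ) t, IntervalIntegrable
        (fun s => g s * (∫ v in (0:ℝ)..s, g v) ^ k) volume 0 u :=
      fun u hu => (hfk k).mono_set
        (hsub u ⟨hu.1, hu.2.trans ht.2⟩ 0 ⟨le_refl _, hu.1⟩)
    have hgIoc : IntegrableOn g (Set.Ioc 0 t) :=
      (intervalIntegrable_iff_integrableOn_Ioc_of_le ht0).mp
        (hgi.mono_set (hsub t ht 0 ⟨le_refl _, ht0⟩))
    have hfIoc : IntegrableOn (fun s => g s * (∫ v in (0:ℝ)..s, g v) ^ k)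
        (Set.Ioc 0 t) :=
      (intervalIntegrable_iff_integrableOn_Ioc_of_le ht0).mp
        (hfkt 0 ⟨le_refl _, ht0⟩)
    set G : ℝ → ℝ := fun x => ∫ u in (0:ℝ)..x, g u with hG
    -- LHS in set form
    have e1 : ∫ s in (0:ℝ)..t, g s * G s ^ (k+1)
        = ∫ s in Set.Ioc (0:ℝ) t, (g s * G s ^ k) * (∫ u in Set.Ioc (0:ℝ) s, g u) := by
      rw [intervalIntegral.integral_of_le ht0]
      refine setIntegral_congr_ae measurableSet_Ioc ?_
      filter_upwards with s hs
      have : G s = ∫ u in Set.Ioc (0:ℝ) s, g u :=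
        intervalIntegral.integral_of_le hs.1.le
      rw [pow_succ]
      rw [← this]; ring
    have e2 := tri_swap (t := t) (f := fun s => g s * G s ^ k) (h := g) hfIoc hgIoc
    -- compute the inner integral on the right
    have e3 : ∫ u in Set.Ioc (0:ℝ) t,
        (∫ s in Set.Ioc u t, g s * G s ^ k) * g u
        = ∫ u in Set.Ioc (0:ℝ) t,
          (G t ^ (k+1) / (k+1) - G u ^ (k+1) / (k+1)) * g u := by
      refine setIntegral_congr_ae measurableSet_Ioc ?_
      filter_upwards with u hu
      have hu' : u ∈ Set.Icc (0:ℝ) t := ⟨hu.1.le, hu.2⟩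
      have hadj := intervalIntegral.integral_add_adjacent_intervals
        (hfk0 u hu') (hfkt u hu')
      have hIoc : (∫ s in Set.Ioc u t, g s * G s ^ k)
          = ∫ s in u..t, g s * G s ^ k :=
        (intervalIntegral.integral_of_le hu.2).symm
      have ihu := ih u ⟨hu.1.le, hu.2.trans ht.2⟩
      have iht := ih t ht
      rw [hIoc]
      have : (∫ s in u..t, g s * G s ^ k)
          = (∫ s in (0:ℝ)..t, g s * G s ^ k) - ∫ s in (0:ℝ)..u, g s * G s ^ k := by
        rw [← hadj]; ring
      rw [this, iht, ihu]
    -- expand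
    have hGm : IntegrableOn (fun u => G u ^ (k+1) / (k+1) * g u) (Set.Ioc 0 t) := by
      have : IntervalIntegrable (fun u => G u ^ (k+1) / (k+1) * g u) volume 0 t := by
        refine (hgi.mono_set (hsub t ht 0 ⟨le_refl _, ht0⟩)).continuousOn_mul ?_
        rw [Set.uIcc_of_le ht0]
        exact ((hGc.mono (Set.Icc_subset_Icc le_rfl ht.2)).pow (k+1)).div_const _
      exact (intervalIntegrable_iff_integrableOn_Ioc_of_le ht0).mp this
    have e4 : ∫ u in Set.Ioc (0:ℝ) t,
          (G t ^ (k+1) / (k+1) - G u ^ (k+1) / (k+1)) * g u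
        = G t ^ (k+1) / (k+1) * G t
          - ∫ u in Set.Ioc (0:ℝ) t, G u ^ (k+1) / (k+1) * g u := by
      have expand : ∀ u, (G t ^ (k+1) / (k+1) - G u ^ (k+1) / (k+1)) * g u
          = G t ^ (k+1) / (k+1) * g u - G u ^ (k+1) / (k+1) * g u := by
        intro u; ring
      simp_rw [expand]
      rw [integral_sub (hgIoc.const_mul _) hGm, integral_const_mul]
      have : (∫ u in Set.Ioc (0:ℝ) t, g u) = G t :=
        (intervalIntegral.integral_of_le ht0).symm
      rw [this]
    have e5 : ∫ u in Set.Ioc (0:ℝ) t, G u ^ (k+1) / (k+1) * g u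
        = (∫ s in (0:ℝ)..t, g s * G s ^ (k+1)) / (k+1) := by
      rw [intervalIntegral.integral_of_le ht0, ← integral_div]
      refine setIntegral_congr_ae measurableSet_Ioc ?_
      filter_upwards with u hu
      ring
    have key : (∫ s in (0:ℝ)..t, g s * G s ^ (k+1))
        = G t ^ (k+1) / (k+1) * G t - (∫ s in (0:ℝ)..t, g s * G s ^ (k+1)) / (k+1) := by
      calc (∫ s in (0:ℝ)..t, g s * G s ^ (k+1))
          = ∫ u in Set.Ioc (0:ℝ) t, (∫ s in Set.Ioc u t, g s * G s ^ k) * g u := by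
            rw [e1]; exact e2
        _ = G t ^ (k+1) / (k+1) * G t
            - ∫ u in Set.Ioc (0:ℝ) t, G u ^ (k+1) / (k+1) * g u := by rw [e3, e4]
        _ = _ := by rw [e5]
    set L := ∫ s in (0:ℝ)..t, g s * G s ^ (k+1) with hL
    have hk1 : ((k:ℝ) + 1) ≠ 0 := by positivity
    have hk2 : ((k:ℝ) + 2) ≠ 0 := by positivity
    have key2 : L * ((k:ℝ) + 2) = G t ^ (k+2) := by
      rw [pow_succ]
      field_simp at key
      linear_combination key
    show L = G t ^ (k + 1 + 1) / (↑(k + 1) + 1)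
    have hexp : k + 1 + 1 = k + 2 := rfl
    have hc : (↑(k + 1) : ℝ) + 1 = (k:ℝ) + 2 := by push_cast; ring
    rw [hexp, hc, eq_div_iff hk2]
    exact key2

lemma gronwall_integral_form (T : ℝ) (hT : 0 ≤ T) (g W : ℝ → ℝ) (C : ℝ) (hC : 0 ≤ C)
    (hgi : IntervalIntegrable g volume 0 T)
    (hg0 : ∀ s ∈ Set.Icc (0:ℝ) T, 0 ≤ g s)
    (hWc : ContinuousOn W (Set.Icc 0 T))
    (hineq : ∀ t ∈ Set.Icc (0:ℝ) T, W t ≤ C + ∫ s in (0:ℝ)..t, g s * W s) :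
    ∀ t ∈ Set.Icc (0:ℝ) T, W t ≤ C * Real.exp (∫ s in (0:ℝ)..t, g s) := by
  obtain ⟨M, hM⟩ := isCompact_Icc.exists_bound_of_continuousOn hWc
  set G : ℝ → ℝ := fun x => ∫ s in (0:ℝ)..x, g s with hGdef
  have hGc : ContinuousOn G (Set.Icc 0 T) := by
    have := intervalIntegral.continuousOn_primitive_interval' hgi
      (Set.left_mem_uIcc : (0:ℝ) ∈ Set.uIcc 0 T)
    rwa [Set.uIcc_of_le hT] at this
  have hsub : ∀ t ∈ Set.Icc (0:ℝ) T, Set.uIcc (0:ℝ) t ⊆ Set.uIcc (0:ℝ) T := by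
    intro t ht
    rw [Set.uIcc_of_le ht.1, Set.uIcc_of_le hT]
    exact Set.Icc_subset_Icc le_rfl ht.2
  have hG0 : ∀ t ∈ Set.Icc (0:ℝ) T, 0 ≤ G t := by
    intro t ht
    apply intervalIntegral.integral_nonneg ht.1
    intro s hs
    exact hg0 s ⟨hs.1, hs.2.trans ht.2⟩
  have hterm : ∀ t ∈ Set.Icc (0:ℝ) T, ∀ i : ℕ,
      IntervalIntegrable (fun s => g s * G s ^ i) volume 0 t := by
    intro t ht i
    refine (hgi.mono_set (hsub t ht)).mul_continuousOn ?_
    rw [Set.uIcc_of_le ht.1]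
    exact (hGc.mono (Set.Icc_subset_Icc le_rfl ht.2)).pow i
  have main : ∀ n : ℕ, ∀ t ∈ Set.Icc (0:ℝ) T,
      W t ≤ C * (∑ i ∈ Finset.range n, G t ^ i / i.factorial)
        + M * (G t ^ n / n.factorial) := by
    intro n
    induction n with
    | zero =>
      intro t ht
      simpa using (le_abs_self (W t)).trans (hM t ht)
    | succ n ih =>
      intro t ht
      have ht0 : (0:ℝ) ≤ t := ht.1
      have hWc' : ContinuousOn W (Set.Icc 0 t) := hWc.mono (Set.Icc_subset_Icc le_rfl ht.2)
      have hGc' : ContinuousOn G (Set.Icc 0 t) := hGc.mono (Set.Icc_subset_Icc le_rfl ht.2)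
      have hgW : IntervalIntegrable (fun s => g s * W s) volume 0 t := by
        refine (hgi.mono_set (hsub t ht)).mul_continuousOn ?_
        rwa [Set.uIcc_of_le ht0]
      have hBc : ContinuousOn
          (fun s => C * (∑ i ∈ Finset.range n, G s ^ i / i.factorial)
            + M * (G s ^ n / n.factorial)) (Set.Icc 0 t) := by
        refine (continuousOn_const.mul ?_).add (continuousOn_const.mul ((hGc'.pow n).div_const _))
        exact continuousOn_finset_sum _ (fun i _ => (hGc'.pow i).div_const _)
      have hgB : IntervalIntegrable
          (fun s => g s * (C * (∑ i ∈ Finset.range n, G s ^ i / i.factorial)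
            + M * (G s ^ n / n.factorial))) volume 0 t := by
        refine (hgi.mono_set (hsub t ht)).mul_continuousOn ?_
        rwa [Set.uIcc_of_le ht0]
      have step1 : W t ≤ C + ∫ s in (0:ℝ)..t, g s *
          (C * (∑ i ∈ Finset.range n, G s ^ i / i.factorial)
            + M * (G s ^ n / n.factorial)) := by
        refine (hineq t ht).trans (add_le_add_right ?_ C)
        refine intervalIntegral.integral_mono_on ht0 hgW hgB ?_
        intro s hs
        have hs' : s ∈ Set.Icc (0:ℝ) T := ⟨hs.1, hs.2.trans ht.2⟩
        exact mul_le_mul_of_nonneg_left (ih s hs') (hg0 s hs')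
      have hrw : ∀ s : ℝ, g s * (C * (∑ i ∈ Finset.range n, G s ^ i / i.factorial)
            + M * (G s ^ n / n.factorial))
          = (∑ i ∈ Finset.range n, C / i.factorial * (g s * G s ^ i))
            + M / n.factorial * (g s * G s ^ n) := by
        intro s
        rw [mul_add, Finset.mul_sum, Finset.mul_sum]
        congr 1
        · exact Finset.sum_congr rfl fun i _ => by ring
        · ring
      have step2 : (∫ s in (0:ℝ)..t, g s *
          (C * (∑ i ∈ Finset.range n, G s ^ i / i.factorial)
            + M * (G s ^ n / n.factorial)))
          = (∑ i ∈ Finset.range n, C / i.factorial * (G t ^ (i+1) / (i+1)))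
            + M / n.factorial * (G t ^ (n+1) / (n+1)) := by
        simp_rw [hrw]
        have h1 : IntervalIntegrable
            (fun s => ∑ i ∈ Finset.range n, C / i.factorial * (g s * G s ^ i)) volume 0 t := by
          have := IntervalIntegrable.sum (μ := volume) (a := 0) (b := t) (Finset.range n)
            (f := fun i => fun s => C / i.factorial * (g s * G s ^ i))
            (fun i _ => (hterm t ht i).const_mul _)
          rwa [show (∑ x ∈ Finset.range n, fun s => C / (x.factorial:ℝ) * (g s * G s ^ x))
              = (fun s => ∑ i ∈ Finset.range n, C / (i.factorial:ℝ) * (g s * G s ^ i)) from by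
            funext s; simp] at this
        rw [intervalIntegral.integral_add h1 ((hterm t ht n).const_mul _)]
        rw [intervalIntegral.integral_finset_sum (fun i _ => (hterm t ht i).const_mul _)]
        congr 1
        · refine Finset.sum_congr rfl fun i _ => ?_
          rw [intervalIntegral.integral_const_mul, primitive_pow_identity T hT g hgi i t ht]
        · rw [intervalIntegral.integral_const_mul, primitive_pow_identity T hT g hgi n t ht]
      have factorial_ne : ∀ m : ℕ, ((m.factorial : ℝ)) ≠ 0 :=
        fun m => Nat.cast_ne_zero.mpr (Nat.factorial_ne_zero m)
      have step3 : C + ((∑ i ∈ Finset.range n, C / i.factorial * (G t ^ (i+1) / (i+1)))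
            + M / n.factorial * (G t ^ (n+1) / (n+1)))
          = C * (∑ i ∈ Finset.range (n+1), G t ^ i / i.factorial)
            + M * (G t ^ (n+1) / (n+1).factorial) := by
        rw [Finset.sum_range_succ']
        have e1 : ∀ i : ℕ, C / i.factorial * (G t ^ (i+1) / (i+1))
            = C * (G t ^ (i+1) / (i+1).factorial) := by
          intro i
          have hf : (((i+1).factorial : ℕ) : ℝ) = ((i:ℝ)+1) * i.factorial := by
            rw [Nat.factorial_succ]; push_cast; ring
          rw [hf, div_mul_div_comm, mul_div_assoc]
          ring
        have e2 : M / n.factorial * (G t ^ (n+1) / (n+1))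
            = M * (G t ^ (n+1) / (n+1).factorial) := by
          have hf : (((n+1).factorial : ℕ) : ℝ) = ((n:ℝ)+1) * n.factorial := by
            rw [Nat.factorial_succ]; push_cast; ring
          rw [hf, div_mul_div_comm, mul_div_assoc]
          ring
        simp_rw [e1, e2]
        rw [mul_add, Finset.mul_sum]
        simp only [pow_zero, Nat.factorial_zero, Nat.cast_one, div_one, mul_one]
        ring
      calc W t ≤ _ := step1
        _ = C + ((∑ i ∈ Finset.range n, C / i.factorial * (G t ^ (i+1) / (i+1)))
            + M / n.factorial * (G t ^ (n+1) / (n+1))) := by rw [step2]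
        _ = _ := step3
  -- pass to the limit
  intro t ht
  have hM0 : 0 ≤ M := le_trans (norm_nonneg _) (hM t ht)
  have hSn : ∀ n : ℕ, C * (∑ i ∈ Finset.range n, G t ^ i / i.factorial)
      ≤ C * Real.exp (G t) :=
    fun n => mul_le_mul_of_nonneg_left (Real.sum_le_exp_of_nonneg (hG0 t ht) n) hC
  have hbound : ∀ n : ℕ, W t ≤ C * Real.exp (G t) + M * (G t ^ n / n.factorial) :=
    fun n => (main n t ht).trans (add_le_add_left (hSn n) _)
  have htend : Tendsto (fun n : ℕ => C * Real.exp (G t) + M * (G t ^ n / n.factorial))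
      atTop (nhds (C * Real.exp (G t))) := by
    have := (FloorSemiring.tendsto_pow_div_factorial_atTop (G t)).const_mul M
    simpa using tendsto_const_nhds.add this
  exact ge_of_tendsto' htend hbound

lemma sqrt_integral_CS (t : ℝ) (ht : 0 ≤ t) (Z : ℝ → ℝ)
    (hZm : AEStronglyMeasurable Z (volume.restrict (Set.Ioc 0 t)))
    (hZ0 : ∀ s ∈ Set.Ioc (0:ℝ) t, 0 ≤ Z s)
    (hZi : IntegrableOn Z (Set.Ioc 0 t)) :
    (∫ s in (0:ℝ)..t, Real.sqrt (Z s)) ≤ Real.sqrt t * Real.sqrt (∫ s in (0:ℝ)..t, Z s) := by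
  set μt := volume.restrict (Set.Ioc (0:ℝ) t) with hμt
  haveI : IsFiniteMeasure μt := ⟨by
    rw [hμt, Measure.restrict_apply_univ]; exact measure_Ioc_lt_top⟩
  have hconj : Real.HolderConjugate 2 2 := Real.HolderConjugate.two_two
  have hfm : AEStronglyMeasurable (fun s => Real.sqrt (Z s)) μt :=
    Real.continuous_sqrt.comp_aestronglyMeasurable hZm
  have hsq : (fun s => (Real.sqrt (Z s)) ^ (2:ℕ)) =ᵐ[μt] Z := by
    filter_upwards [ae_restrict_mem measurableSet_Ioc] with s hs
    exact Real.sq_sqrt (hZ0 s hs)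
  have hmem : MemLp (fun s => Real.sqrt (Z s)) (ENNReal.ofReal 2) μt := by
    rw [show ENNReal.ofReal 2 = 2 by norm_num]
    rw [memLp_two_iff_integrable_sq hfm]
    exact hZi.congr hsq.symm
  have hmem1 : MemLp (fun _ : ℝ => (1:ℝ)) (ENNReal.ofReal 2) μt := memLp_const 1
  have hH := integral_mul_le_Lp_mul_Lq_of_nonneg hconj
    (ae_of_all _ fun s => Real.sqrt_nonneg (Z s)) (ae_of_all _ fun _ => zero_le_one)
    hmem hmem1
  have e0 : (∫ s, Real.sqrt (Z s) * 1 ∂μt) = ∫ s in (0:ℝ)..t, Real.sqrt (Z s) := by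
    rw [intervalIntegral.integral_of_le ht]; simp [hμt]
  have e1 : (∫ s, Real.sqrt (Z s) ^ (2:ℝ) ∂μt) = ∫ s in (0:ℝ)..t, Z s := by
    rw [intervalIntegral.integral_of_le ht, hμt]
    refine integral_congr_ae ?_
    filter_upwards [ae_restrict_mem measurableSet_Ioc] with s hs
    rw [show (2:ℝ) = ((2:ℕ):ℝ) by norm_num, Real.rpow_natCast]
    exact Real.sq_sqrt (hZ0 s hs)
  have e2 : (∫ _s, (1:ℝ) ^ (2:ℝ) ∂μt) = t := by
    simp [hμt, Real.one_rpow, Real.volume_Ioc, ENNReal.toReal_ofReal ht, ht]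
  have hIZ : 0 ≤ ∫ s in (0:ℝ)..t, Z s := by
    rw [intervalIntegral.integral_of_le ht]
    exact setIntegral_nonneg measurableSet_Ioc hZ0
  rw [e0, e1, e2] at hH
  rw [← Real.sqrt_eq_rpow, ← Real.sqrt_eq_rpow] at hH
  calc (∫ s in (0:ℝ)..t, Real.sqrt (Z s)) ≤ _ := hH
    _ = Real.sqrt t * Real.sqrt (∫ s in (0:ℝ)..t, Z s) := mul_comm _ _

/-- **Two-function Grönwall-type lemma.** Let `X, Y, Z, γ, η` be non-negative functions on
`[0, T]`, with `X` and `Y` absolutely continuous (encoded by the fundamental theorem of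
calculus representations with integrable `X'`, `Y'`), `Z` measurable, `γ` and `η`
integrable over `[0, T]`, and `A > 0`.  Suppose that for a.e. `t ∈ [0, T]`,
`X' t ≤ A * Z t ^ (1/2)` and `Y' t + Z t ≤ γ t * Y t + η t * X t ^ 2`, and `X 0 = 0`.
Then for every `t ∈ [0, T]`,
`X t ≤ A * (Y 0) ^ (1/2) * t ^ (1/2) * exp ((1/2) * ∫_0^t (γ s + A^2 * s * η s) ds)` and
`Y t + ∫_0^t Z s ds ≤ Y 0 * exp (∫_0^t (γ s + A^2 * s * η s) ds)`. -/

theorem two_function_gronwall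
    (T : ℝ) (hT : 0 ≤ T) (A : ℝ) (hA : 0 < A) (X X' Y Y' Z γ η : ℝ → ℝ)
    (hX_nonneg : ∀ t ∈ Set.Icc 0 T, 0 ≤ X t)
    (hY_nonneg : ∀ t ∈ Set.Icc 0 T, 0 ≤ Y t)
    (hZ_nonneg : ∀ t ∈ Set.Icc 0 T, 0 ≤ Z t)
    (hγ_nonneg : ∀ t ∈ Set.Icc 0 T, 0 ≤ γ t)
    (hη_nonneg : ∀ t ∈ Set.Icc 0 T, 0 ≤ η t)
    (hZ_meas : AEStronglyMeasurable Z (volume.restrict (Set.Icc 0 T)))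
    (hγ_int : IntervalIntegrable γ volume 0 T)
    (hη_int : IntervalIntegrable η volume 0 T)
    (hX'_int : IntervalIntegrable X' volume 0 T)
    (hY'_int : IntervalIntegrable Y' volume 0 T)
    (hX_ac : ∀ t ∈ Set.Icc 0 T, X t = X 0 + ∫ s in (0:ℝ)..t, X' s)
    (hY_ac : ∀ t ∈ Set.Icc 0 T, Y t = Y 0 + ∫ s in (0:ℝ)..t, Y' s)
    (hODE₁ : ∀ᵐ t ∂(volume.restrict (Set.Icc 0 T)), X' t ≤ A * Real.sqrt (Z t))
    (hODE₂ : ∀ᵐ t ∂(volume.restrict (Set.Icc 0 T)),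
      Y' t + Z t ≤ γ t * Y t + η t * X t ^ 2)
    (hX0 : X 0 = 0) :
    ∀ t ∈ Set.Icc 0 T,
      X t ≤ A * Real.sqrt (Y 0) * Real.sqrt t *
          Real.exp ((1 / 2) * ∫ s in (0:ℝ)..t, γ s + A ^ 2 * s * η s) ∧
      Y t + (∫ s in (0:ℝ)..t, Z s) ≤
          Y 0 * Real.exp (∫ s in (0:ℝ)..t, γ s + A ^ 2 * s * η s) := by
  have hIccT : Set.uIcc (0:ℝ) T = Set.Icc 0 T := Set.uIcc_of_le hT
  have hsub : ∀ t ∈ Set.Icc (0:ℝ) T, Set.uIcc (0:ℝ) t ⊆ Set.uIcc (0:ℝ) T := by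
    intro t ht
    rw [Set.uIcc_of_le ht.1, hIccT]
    exact Set.Icc_subset_Icc le_rfl ht.2
  set g : ℝ → ℝ := fun s => γ s + A ^ 2 * s * η s with hgdef
  have hg_int : IntervalIntegrable g volume 0 T := by
    refine hγ_int.add (hη_int.continuousOn_mul ?_)
    exact (continuous_const.mul continuous_id).continuousOn
  have hg0 : ∀ s ∈ Set.Icc (0:ℝ) T, 0 ≤ g s := fun s hs =>
    add_nonneg (hγ_nonneg s hs) (mul_nonneg (mul_nonneg (sq_nonneg A) hs.1) (hη_nonneg s hs))
  have hXc : ContinuousOn X (Set.Icc 0 T) := by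
    have h1 : ContinuousOn (fun t => X 0 + ∫ s in (0:ℝ)..t, X' s) (Set.Icc 0 T) := by
      refine continuousOn_const.add ?_
      have := intervalIntegral.continuousOn_primitive_interval' hX'_int
        (Set.left_mem_uIcc : (0:ℝ) ∈ Set.uIcc 0 T)
      rwa [hIccT] at this
    exact h1.congr fun t ht => hX_ac t ht
  have hYc : ContinuousOn Y (Set.Icc 0 T) := by
    have h1 : ContinuousOn (fun t => Y 0 + ∫ s in (0:ℝ)..t, Y' s) (Set.Icc 0 T) := by
      refine continuousOn_const.add ?_
      have := intervalIntegral.continuousOn_primitive_interval' hY'_int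
        (Set.left_mem_uIcc : (0:ℝ) ∈ Set.uIcc 0 T)
      rwa [hIccT] at this
    exact h1.congr fun t ht => hY_ac t ht
  obtain ⟨MX, hMX⟩ := isCompact_Icc.exists_bound_of_continuousOn hXc
  obtain ⟨MY, hMY⟩ := isCompact_Icc.exists_bound_of_continuousOn hYc
  have hγIcc : IntegrableOn γ (Set.Icc 0 T) :=
    (intervalIntegrable_iff_integrableOn_Icc_of_le hT).mp hγ_int
  have hηIcc : IntegrableOn η (Set.Icc 0 T) :=
    (intervalIntegrable_iff_integrableOn_Icc_of_le hT).mp hη_int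
  have hY'Icc : IntegrableOn Y' (Set.Icc 0 T) :=
    (intervalIntegrable_iff_integrableOn_Icc_of_le hT).mp hY'_int
  have hZ_int : IntegrableOn Z (Set.Icc 0 T) := by
    have hBi : IntegrableOn (fun s => γ s * MY + η s * MX ^ 2 + |Y' s|) (Set.Icc 0 T) :=
      ((hγIcc.mul_const MY).add (hηIcc.mul_const (MX ^ 2))).add hY'Icc.abs
    refine Integrable.mono' hBi hZ_meas ?_
    filter_upwards [hODE₂, ae_restrict_mem measurableSet_Icc] with s h2 hs
    rw [Real.norm_eq_abs, abs_of_nonneg (hZ_nonneg s hs)]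
    have hY : Y s ≤ MY := (le_abs_self _).trans (by simpa [Real.norm_eq_abs] using hMY s hs)
    have hX2 : X s ^ 2 ≤ MX ^ 2 := by
      have hx := hMX s hs
      rw [Real.norm_eq_abs] at hx
      calc X s ^ 2 = |X s| ^ 2 := (sq_abs _).symm
        _ ≤ MX ^ 2 := pow_le_pow_left₀ (abs_nonneg _) hx 2
    have h3 : γ s * Y s ≤ γ s * MY := mul_le_mul_of_nonneg_left hY (hγ_nonneg s hs)
    have h4 : η s * X s ^ 2 ≤ η s * MX ^ 2 := mul_le_mul_of_nonneg_left hX2 (hη_nonneg s hs)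
    have h5 : -Y' s ≤ |Y' s| := neg_le_abs _
    linarith
  have hZt : ∀ t ∈ Set.Icc (0:ℝ) T, IntervalIntegrable Z volume 0 t := fun t ht =>
    (intervalIntegrable_iff_integrableOn_Icc_of_le ht.1).mpr
      (hZ_int.mono_set (Set.Icc_subset_Icc le_rfl ht.2))
  have hIZ0 : ∀ t ∈ Set.Icc (0:ℝ) T, 0 ≤ ∫ s in (0:ℝ)..t, Z s := fun t ht =>
    intervalIntegral.integral_nonneg ht.1 (fun s hs => hZ_nonneg s ⟨hs.1, hs.2.trans ht.2⟩)
  have hZm' : ∀ t ∈ Set.Icc (0:ℝ) T,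
      AEStronglyMeasurable Z (volume.restrict (Set.Ioc 0 t)) := by
    intro t ht
    refine hZ_meas.mono_measure (Measure.restrict_mono ?_ le_rfl)
    exact fun x hx => ⟨hx.1.le, hx.2.trans ht.2⟩
  have hsqZ : ∀ t ∈ Set.Icc (0:ℝ) T,
      IntervalIntegrable (fun s => Real.sqrt (Z s)) volume 0 t := by
    intro t ht
    rw [intervalIntegrable_iff_integrableOn_Ioc_of_le ht.1]
    have hIocsub : Set.Ioc (0:ℝ) t ⊆ Set.Icc 0 T := fun x hx => ⟨hx.1.le, hx.2.trans ht.2⟩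
    have hone : IntegrableOn (fun s => 1 + Z s) (Set.Ioc 0 t) :=
      (integrableOn_const measure_Ioc_lt_top.ne).add (hZ_int.mono_set hIocsub)
    refine Integrable.mono' hone
      (Real.continuous_sqrt.comp_aestronglyMeasurable (hZm' t ht)) ?_
    filter_upwards [ae_restrict_mem measurableSet_Ioc] with s hs
    have hz : 0 ≤ Z s := hZ_nonneg s (hIocsub hs)
    rw [Real.norm_eq_abs, abs_of_nonneg (Real.sqrt_nonneg _)]
    nlinarith [Real.sq_sqrt hz, Real.sqrt_nonneg (Z s), sq_nonneg (Real.sqrt (Z s) - 1)]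
  have hXb : ∀ t ∈ Set.Icc (0:ℝ) T,
      X t ≤ A * (Real.sqrt t * Real.sqrt (∫ s in (0:ℝ)..t, Z s)) := by
    intro t ht
    have h1 : X t = ∫ s in (0:ℝ)..t, X' s := by rw [hX_ac t ht, hX0, zero_add]
    have h2 : (∫ s in (0:ℝ)..t, X' s) ≤ ∫ s in (0:ℝ)..t, A * Real.sqrt (Z s) := by
      refine intervalIntegral.integral_mono_ae_restrict ht.1
        (hX'_int.mono_set (hsub t ht)) ((hsqZ t ht).const_mul A) ?_
      exact ae_restrict_of_ae_restrict_of_subset (Set.Icc_subset_Icc le_rfl ht.2) hODE₁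
    have h3 := sqrt_integral_CS t ht.1 Z (hZm' t ht)
      (fun s hs => hZ_nonneg s ⟨hs.1.le, hs.2.trans ht.2⟩)
      ((intervalIntegrable_iff_integrableOn_Ioc_of_le ht.1).mp (hZt t ht))
    rw [h1]
    calc (∫ s in (0:ℝ)..t, X' s) ≤ _ := h2
      _ = A * ∫ s in (0:ℝ)..t, Real.sqrt (Z s) := by
          rw [intervalIntegral.integral_const_mul]
      _ ≤ A * (Real.sqrt t * Real.sqrt (∫ s in (0:ℝ)..t, Z s)) :=
          mul_le_mul_of_nonneg_left h3 hA.le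
  have hX2b : ∀ s ∈ Set.Icc (0:ℝ) T, X s ^ 2 ≤ A ^ 2 * s * (∫ u in (0:ℝ)..s, Z u) := by
    intro s hs
    have h := hXb s hs
    have h0 : 0 ≤ X s := hX_nonneg s hs
    have hrhs : (A * (Real.sqrt s * Real.sqrt (∫ u in (0:ℝ)..s, Z u))) ^ 2
        = A ^ 2 * s * (∫ u in (0:ℝ)..s, Z u) := by
      rw [mul_pow, mul_pow, Real.sq_sqrt hs.1, Real.sq_sqrt (hIZ0 s hs)]
      ring
    calc X s ^ 2 ≤ (A * (Real.sqrt s * Real.sqrt (∫ u in (0:ℝ)..s, Z u))) ^ 2 :=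
        pow_le_pow_left₀ h0 h 2
      _ = _ := hrhs
  set W : ℝ → ℝ := fun t => Y 0 + ∫ s in (0:ℝ)..t, (Y' s + Z s) with hWdef
  have hWeq : ∀ t ∈ Set.Icc (0:ℝ) T, W t = Y t + ∫ s in (0:ℝ)..t, Z s := by
    intro t ht
    show Y 0 + (∫ s in (0:ℝ)..t, (Y' s + Z s)) = _
    rw [intervalIntegral.integral_add (hY'_int.mono_set (hsub t ht)) (hZt t ht),
      hY_ac t ht]
    ring
  have hWc : ContinuousOn W (Set.Icc 0 T) := by
    refine continuousOn_const.add ?_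
    have := intervalIntegral.continuousOn_primitive_interval'
      (hY'_int.add ((intervalIntegrable_iff_integrableOn_Icc_of_le hT).mpr hZ_int))
      (Set.left_mem_uIcc : (0:ℝ) ∈ Set.uIcc 0 T)
    rwa [hIccT] at this
  have hYleW : ∀ t ∈ Set.Icc (0:ℝ) T, Y t ≤ W t := by
    intro t ht; rw [hWeq t ht]; linarith [hIZ0 t ht]
  have hZleW : ∀ t ∈ Set.Icc (0:ℝ) T, (∫ s in (0:ℝ)..t, Z s) ≤ W t := by
    intro t ht; rw [hWeq t ht]; linarith [hY_nonneg t ht]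
  have hkey : ∀ t ∈ Set.Icc (0:ℝ) T, W t ≤ Y 0 + ∫ s in (0:ℝ)..t, g s * W s := by
    intro t ht
    show Y 0 + (∫ s in (0:ℝ)..t, (Y' s + Z s)) ≤ _
    refine add_le_add_right ?_ (Y 0)
    have hgW : IntervalIntegrable (fun s => g s * W s) volume 0 t := by
      refine (hg_int.mono_set (hsub t ht)).mul_continuousOn ?_
      rw [Set.uIcc_of_le ht.1]
      exact hWc.mono (Set.Icc_subset_Icc le_rfl ht.2)
    refine intervalIntegral.integral_mono_ae_restrict ht.1
      ((hY'_int.mono_set (hsub t ht)).add (hZt t ht)) hgW ?_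
    have h2 := ae_restrict_of_ae_restrict_of_subset (Set.Icc_subset_Icc le_rfl ht.2) hODE₂
    filter_upwards [h2, ae_restrict_mem measurableSet_Icc] with s hode hs
    have hs' : s ∈ Set.Icc (0:ℝ) T := ⟨hs.1, hs.2.trans ht.2⟩
    have b1 : γ s * Y s ≤ γ s * W s :=
      mul_le_mul_of_nonneg_left (hYleW s hs') (hγ_nonneg s hs')
    have b2 : η s * X s ^ 2 ≤ η s * (A ^ 2 * s * W s) := by
      refine mul_le_mul_of_nonneg_left ?_ (hη_nonneg s hs')
      calc X s ^ 2 ≤ A ^ 2 * s * (∫ u in (0:ℝ)..s, Z u) := hX2b s hs'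
        _ ≤ A ^ 2 * s * W s := mul_le_mul_of_nonneg_left (hZleW s hs')
            (mul_nonneg (sq_nonneg A) hs.1)
    have hgw : g s * W s = γ s * W s + η s * (A ^ 2 * s * W s) := by
      rw [hgdef]; ring
    rw [hgw]
    linarith
  have hY00 : 0 ≤ Y 0 := hY_nonneg 0 ⟨le_rfl, hT⟩
  have hWle := gronwall_integral_form T hT g W (Y 0) hY00 hg_int hg0 hWc hkey
  intro t ht
  constructor
  · have h1 := hXb t ht
    have h2 : Real.sqrt (∫ s in (0:ℝ)..t, Z s)
        ≤ Real.sqrt (Y 0 * Real.exp (∫ s in (0:ℝ)..t, g s)) :=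
      Real.sqrt_le_sqrt ((hZleW t ht).trans (hWle t ht))
    have h3 : Real.sqrt (Y 0 * Real.exp (∫ s in (0:ℝ)..t, g s))
        = Real.sqrt (Y 0) * Real.exp ((1/2) * ∫ s in (0:ℝ)..t, g s) := by
      rw [Real.sqrt_mul hY00]
      congr 1
      rw [show Real.exp (∫ s in (0:ℝ)..t, g s)
          = Real.exp ((1/2) * ∫ s in (0:ℝ)..t, g s)
            * Real.exp ((1/2) * ∫ s in (0:ℝ)..t, g s) by
        rw [← Real.exp_add]; congr 1; ring]
      exact Real.sqrt_mul_self (Real.exp_nonneg _)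
    calc X t ≤ A * (Real.sqrt t * Real.sqrt (∫ s in (0:ℝ)..t, Z s)) := h1
      _ ≤ A * (Real.sqrt t * (Real.sqrt (Y 0)
            * Real.exp ((1/2) * ∫ s in (0:ℝ)..t, g s))) := by
          rw [← h3]
          exact mul_le_mul_of_nonneg_left
            (mul_le_mul_of_nonneg_left h2 (Real.sqrt_nonneg t)) hA.le
      _ = A * Real.sqrt (Y 0) * Real.sqrt t
            * Real.exp ((1/2) * ∫ s in (0:ℝ)..t, g s) := by ring
  · rw [← hWeq t ht]
    exact hWle t ht
end

section
/- Let $X,Y,Z,\gamma,\eta$ be non-negative functions on $[0,T]$, with $X$ and $Y$ absolutely continuous, $Z$ measurable, $\gamma$ and $\eta$ integrable over $[0,T]$, and let $A>0$ be a constant. Suppose that for almost every $t\in[0,T]$: $\frac{d}{dt}X(t)\le A Z^{1/2}(t)$ and $\frac{d}{dt}Y(t)+Z(t)\le \gamma(t)Y(t)+\eta(t)X^2(t)$, and that $X(0)=0$ and $Y(0)=0$. Then $X(t)=0$ and $Y(t)=0$ for all $t\in[0,T]$, and $Z(t)=0$ for almost every $t\in[0,T]$. -/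
open MeasureTheory Real Filter

lemma gronwall_zero_aux (T : ℝ) (hT : 0 ≤ T) (V φ : ℝ → ℝ)
    (hV_cont : ContinuousOn V (Set.Icc 0 T))
    (hV_nonneg : ∀ t ∈ Set.Icc 0 T, 0 ≤ V t)
    (hφ_nonneg : ∀ t ∈ Set.Icc 0 T, 0 ≤ φ t)
    (hφ_int : IntervalIntegrable φ volume 0 T)
    (hint : IntervalIntegrable (fun s => φ s * V s) volume 0 T)
    (key : ∀ t ∈ Set.Icc 0 T, V t ≤ ∫ s in (0:ℝ)..t, φ s * V s) :
    ∀ t ∈ Set.Icc 0 T, V t = 0 := by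
  have hsub : ∀ t ∈ Set.Icc 0 T, Set.uIcc 0 t ⊆ Set.uIcc 0 T := by
    intro t ht
    rw [Set.uIcc_of_le ht.1, Set.uIcc_of_le hT]
    exact Set.Icc_subset_Icc le_rfl ht.2
  set S : Set ℝ := {t | t ∈ Set.Icc 0 T ∧ ∀ s ∈ Set.Icc 0 t, V s = 0} with hS
  have h0S : (0:ℝ) ∈ S := by
    have h0 : V 0 = 0 := by
      have := key 0 ⟨le_rfl, hT⟩
      simp only [intervalIntegral.integral_same] at this
      exact le_antisymm this (hV_nonneg 0 ⟨le_rfl, hT⟩)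
    exact ⟨⟨le_rfl, hT⟩, fun s hs => by
      have : s = 0 := le_antisymm hs.2 hs.1
      rw [this]; exact h0⟩
  have hne : S.Nonempty := ⟨0, h0S⟩
  have hbdd : BddAbove S := ⟨T, fun t ht => ht.1.2⟩
  set c := sSup S with hc
  have hc0 : 0 ≤ c := le_csSup hbdd h0S
  have hcT : c ≤ T := csSup_le hne fun t ht => ht.1.2
  have hlt : ∀ s, 0 ≤ s → s < c → V s = 0 := by
    intro s hs0 hsc
    obtain ⟨t, htS, hst⟩ := exists_lt_of_lt_csSup hne hsc
    exact htS.2 s ⟨hs0, hst.le⟩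
  have hVc : V c = 0 := by
    have hzero : (∫ r in (0:ℝ)..c, φ r * V r) = ∫ r in (0:ℝ)..c, (0:ℝ) := by
      apply intervalIntegral.integral_congr_ae
      have hne' : ∀ᵐ x : ℝ ∂(volume : Measure ℝ), x ≠ c := by
        rw [ae_iff]
        simp only [ne_eq, not_not, Set.setOf_eq_eq_singleton]
        exact measure_singleton c
      filter_upwards [hne'] with x hx hxI
      rw [Set.uIoc_of_le hc0] at hxI
      rw [hlt x hxI.1.le (lt_of_le_of_ne hxI.2 hx), mul_zero]
    have := key c ⟨hc0, hcT⟩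
    rw [hzero] at this
    simp only [intervalIntegral.integral_zero] at this
    exact le_antisymm this (hV_nonneg c ⟨hc0, hcT⟩)
  have hcS : ∀ s ∈ Set.Icc 0 c, V s = 0 := by
    intro s hs
    rcases lt_or_eq_of_le hs.2 with h | h
    · exact hlt s hs.1 h
    · rw [h]; exact hVc
  rcases eq_or_lt_of_le hcT with hceq | hclt
  · intro t ht
    exact hcS t ⟨ht.1, ht.2.trans_eq hceq.symm⟩
  · exfalso
    -- continuity of the primitive of φ
    set Φ : ℝ → ℝ := fun t => ∫ s in (0:ℝ)..t, φ s with hΦdef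
    have hΦ_cont : ContinuousOn Φ (Set.Icc 0 T) := by
      have := intervalIntegral.continuousOn_primitive_interval' hφ_int
        (Set.left_mem_uIcc (a := (0:ℝ)) (b := T))
      rwa [Set.uIcc_of_le hT] at this
    have hΦc : ContinuousWithinAt Φ (Set.Icc 0 T) c := hΦ_cont c ⟨hc0, hcT⟩
    have hmem : Φ ⁻¹' Set.Iio (Φ c + 1/2) ∈ nhdsWithin c (Set.Icc 0 T) :=
      hΦc (Iio_mem_nhds (by linarith))
    obtain ⟨ε, hε, hball⟩ := Metric.mem_nhdsWithin_iff.1 hmem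
    set δ := min (ε/2) (T - c) with hδdef
    have hδ : 0 < δ := lt_min (by linarith) (by linarith)
    set b := c + δ with hbdef
    have hcb : c < b := by simp [hbdef]; linarith
    have hbT : b ≤ T := by
      have : δ ≤ T - c := min_le_right _ _
      simp [hbdef]; linarith
    have hb0 : 0 ≤ b := hc0.trans hcb.le
    have hΦb : ∀ t ∈ Set.Icc c b, Φ t - Φ c ≤ 1/2 := by
      intro t ht
      have htT : t ∈ Set.Icc 0 T := ⟨hc0.trans ht.1, ht.2.trans hbT⟩
      have hdist : t ∈ Metric.ball c ε := by
        rw [Metric.mem_ball, Real.dist_eq, abs_of_nonneg (by linarith [ht.1])]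
        have : δ ≤ ε / 2 := min_le_left _ _
        have := ht.2
        simp only [hbdef] at this
        linarith
      have := hball ⟨hdist, htT⟩
      simp only [Set.mem_preimage, Set.mem_Iio] at this
      linarith
    -- maximum of V on [c, b]
    obtain ⟨x, hx, hmax⟩ := isCompact_Icc.exists_isMaxOn (Set.nonempty_Icc.2 hcb.le)
      (hV_cont.mono (Set.Icc_subset_Icc hc0 hbT))
    set M := V x with hM
    have hxT : x ∈ Set.Icc 0 T := ⟨hc0.trans hx.1, hx.2.trans hbT⟩
    have hM0 : 0 ≤ M := hV_nonneg x hxT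
    have bound : ∀ t ∈ Set.Icc c b, V t ≤ M * (1/2) := by
      intro t ht
      have htT : t ∈ Set.Icc 0 T := ⟨hc0.trans ht.1, ht.2.trans hbT⟩
      have hint_t : IntervalIntegrable (fun s => φ s * V s) volume 0 t :=
        hint.mono_set (hsub t htT)
      have hint_0c : IntervalIntegrable (fun s => φ s * V s) volume 0 c :=
        hint.mono_set (hsub c ⟨hc0, hcT⟩)
      have hint_ct : IntervalIntegrable (fun s => φ s * V s) volume c t := by
        apply hint.mono_set
        rw [Set.uIcc_of_le ht.1, Set.uIcc_of_le hT]
        exact Set.Icc_subset_Icc hc0 htT.2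
      have hsplit : (∫ s in (0:ℝ)..t, φ s * V s)
          = (∫ s in (0:ℝ)..c, φ s * V s) + ∫ s in c..t, φ s * V s :=
        (intervalIntegral.integral_add_adjacent_intervals hint_0c hint_ct).symm
      have hzero0c : (∫ s in (0:ℝ)..c, φ s * V s) = 0 := by
        rw [intervalIntegral.integral_congr (g := fun _ => (0:ℝ))
          (fun s hs => by
            rw [Set.uIcc_of_le hc0] at hs
            simp [hcS s hs])]
        simp
      have hφ_ct : IntervalIntegrable φ volume c t := by
        apply hφ_int.mono_set
        rw [Set.uIcc_of_le ht.1, Set.uIcc_of_le hT]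
        exact Set.Icc_subset_Icc hc0 htT.2
      have hmono : (∫ s in c..t, φ s * V s) ≤ ∫ s in c..t, φ s * M := by
        apply intervalIntegral.integral_mono_on ht.1 hint_ct (hφ_ct.mul_const M)
        intro s hs
        have hsT : s ∈ Set.Icc 0 T := ⟨hc0.trans hs.1, hs.2.trans htT.2⟩
        exact mul_le_mul_of_nonneg_left (hmax ⟨hs.1, hs.2.trans ht.2⟩) (hφ_nonneg s hsT)
      have heval : (∫ s in c..t, φ s * M) = (Φ t - Φ c) * M := by
        rw [intervalIntegral.integral_mul_const]
        congr 1
        rw [hΦdef]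
        exact (intervalIntegral.integral_interval_sub_left
          (hφ_int.mono_set (hsub t htT)) (hφ_int.mono_set (hsub c ⟨hc0, hcT⟩))).symm
      calc V t ≤ ∫ s in (0:ℝ)..t, φ s * V s := key t htT
        _ = ∫ s in c..t, φ s * V s := by rw [hsplit, hzero0c, zero_add]
        _ ≤ (Φ t - Φ c) * M := by rw [← heval]; exact hmono
        _ ≤ (1/2) * M := mul_le_mul_of_nonneg_right (hΦb t ht) hM0
        _ = M * (1/2) := by ring
    have hMzero : M = 0 := by
      have := bound x hx
      rw [← hM] at this
      linarith
    have hbS : b ∈ S := by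
      refine ⟨⟨hb0, hbT⟩, fun s hs => ?_⟩
      rcases le_or_gt s c with h | h
      · exact hcS s ⟨hs.1, h⟩
      · have hsT : s ∈ Set.Icc 0 T := ⟨hs.1, hs.2.trans hbT⟩
        have := bound s ⟨h.le, hs.2⟩
        rw [hMzero] at this
        exact le_antisymm (by linarith) (hV_nonneg s hsT)
    have : b ≤ c := le_csSup hbdd hbS
    linarith


/-- **Vanishing case of the two-function Grönwall-type lemma.** Under the hypotheses of
the two-function Grönwall lemma, if moreover `X 0 = 0` and `Y 0 = 0`, then `X t = 0` and
`Y t = 0` for all `t ∈ [0, T]`, and `Z t = 0` for almost every `t ∈ [0, T]`. -/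
theorem two_function_gronwall_vanishing
    (T : ℝ) (hT : 0 ≤ T) (A : ℝ) (hA : 0 < A) (X X' Y Y' Z γ η : ℝ → ℝ)
    (hX_nonneg : ∀ t ∈ Set.Icc 0 T, 0 ≤ X t)
    (hY_nonneg : ∀ t ∈ Set.Icc 0 T, 0 ≤ Y t)
    (hZ_nonneg : ∀ t ∈ Set.Icc 0 T, 0 ≤ Z t)
    (hγ_nonneg : ∀ t ∈ Set.Icc 0 T, 0 ≤ γ t)
    (hη_nonneg : ∀ t ∈ Set.Icc 0 T, 0 ≤ η t)
    (hZ_meas : AEStronglyMeasurable Z (volume.restrict (Set.Icc 0 T)))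
    (hγ_int : IntervalIntegrable γ volume 0 T)
    (hη_int : IntervalIntegrable η volume 0 T)
    (hX'_int : IntervalIntegrable X' volume 0 T)
    (hY'_int : IntervalIntegrable Y' volume 0 T)
    (hX_ac : ∀ t ∈ Set.Icc 0 T, X t = X 0 + ∫ s in (0:ℝ)..t, X' s)
    (hY_ac : ∀ t ∈ Set.Icc 0 T, Y t = Y 0 + ∫ s in (0:ℝ)..t, Y' s)
    (hODE₁ : ∀ᵐ t ∂(volume.restrict (Set.Icc 0 T)), X' t ≤ A * Real.sqrt (Z t))
    (hODE₂ : ∀ᵐ t ∂(volume.restrict (Set.Icc 0 T)),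
      Y' t + Z t ≤ γ t * Y t + η t * X t ^ 2)
    (hX0 : X 0 = 0) (hY0 : Y 0 = 0) :
    (∀ t ∈ Set.Icc 0 T, X t = 0 ∧ Y t = 0) ∧
      (∀ᵐ t ∂(volume.restrict (Set.Icc 0 T)), Z t = 0) := by
  have hsub : ∀ t ∈ Set.Icc 0 T, Set.uIcc 0 t ⊆ Set.uIcc 0 T := by
    intro t ht
    rw [Set.uIcc_of_le ht.1, Set.uIcc_of_le hT]
    exact Set.Icc_subset_Icc le_rfl ht.2
  have hsubIcc : ∀ t ∈ Set.Icc 0 T, Set.Icc 0 t ⊆ Set.Icc 0 T :=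
    fun t ht => Set.Icc_subset_Icc le_rfl ht.2
  -- continuity of X and Y
  have hYc : ContinuousOn Y (Set.Icc 0 T) := by
    have h1 : ContinuousOn (fun t => Y 0 + ∫ s in (0:ℝ)..t, Y' s) (Set.Icc 0 T) := by
      apply continuousOn_const.add
      have := intervalIntegral.continuousOn_primitive_interval' hY'_int
        (Set.left_mem_uIcc (a := (0:ℝ)) (b := T))
      rwa [Set.uIcc_of_le hT] at this
    exact h1.congr fun t ht => hY_ac t ht
  have hXc : ContinuousOn X (Set.Icc 0 T) := by
    have h1 : ContinuousOn (fun t => X 0 + ∫ s in (0:ℝ)..t, X' s) (Set.Icc 0 T) := by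
      apply continuousOn_const.add
      have := intervalIntegral.continuousOn_primitive_interval' hX'_int
        (Set.left_mem_uIcc (a := (0:ℝ)) (b := T))
      rwa [Set.uIcc_of_le hT] at this
    exact h1.congr fun t ht => hX_ac t ht
  -- integrability facts
  have hγY_int : IntervalIntegrable (fun s => γ s * Y s) volume 0 T :=
    hγ_int.mul_continuousOn (by rwa [Set.uIcc_of_le hT])
  have hηX2_int : IntervalIntegrable (fun s => η s * X s ^ 2) volume 0 T :=
    hη_int.mul_continuousOn (by rw [Set.uIcc_of_le hT]; exact hXc.pow 2)
  have hg_int : IntervalIntegrable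
      (fun s => γ s * Y s + η s * X s ^ 2 - Y' s) volume 0 T :=
    (hγY_int.add hηX2_int).sub hY'_int
  have hg_on : IntegrableOn (fun s => γ s * Y s + η s * X s ^ 2 - Y' s)
      (Set.Icc 0 T) volume := by
    rw [intervalIntegrable_iff', Set.uIcc_of_le hT] at hg_int
    exact hg_int
  have hae_mem : ∀ᵐ t ∂(volume.restrict (Set.Icc 0 T)), t ∈ Set.Icc 0 T :=
    ae_restrict_mem measurableSet_Icc
  have hZ_on : IntegrableOn Z (Set.Icc 0 T) volume := by
    apply Integrable.mono' hg_on hZ_meas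
    filter_upwards [hODE₂, hae_mem] with t h1 h2
    rw [Real.norm_of_nonneg (hZ_nonneg t h2)]
    linarith
  have hZ_int : IntervalIntegrable Z volume 0 T := by
    rw [intervalIntegrable_iff', Set.uIcc_of_le hT]
    exact hZ_on
  have hsqrtZ_on : IntegrableOn (fun s => Real.sqrt (Z s)) (Set.Icc 0 T) volume := by
    apply Integrable.mono' ((integrable_const (1:ℝ)).add hZ_on)
      (Real.continuous_sqrt.comp_aestronglyMeasurable hZ_meas)
    filter_upwards [hae_mem] with t h2
    rw [Real.norm_of_nonneg (Real.sqrt_nonneg _)]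
    simp only [Pi.add_apply]
    nlinarith [Real.sq_sqrt (hZ_nonneg t h2), Real.sqrt_nonneg (Z t), hZ_nonneg t h2]
  have hsqrtZ_int : IntervalIntegrable (fun s => Real.sqrt (Z s)) volume 0 T := by
    rw [intervalIntegrable_iff', Set.uIcc_of_le hT]
    exact hsqrtZ_on
  -- definitions
  set u : ℝ → ℝ := fun t => ∫ s in (0:ℝ)..t, Z s with hu_def
  set V : ℝ → ℝ := fun t => Y t + u t with hV_def
  set φ : ℝ → ℝ := fun s => γ s + A ^ 2 * T * η s with hφ_def
  have hu_cont : ContinuousOn u (Set.Icc 0 T) := by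
    have := intervalIntegral.continuousOn_primitive_interval' hZ_int
      (Set.left_mem_uIcc (a := (0:ℝ)) (b := T))
    rwa [Set.uIcc_of_le hT] at this
  have hV_cont : ContinuousOn V (Set.Icc 0 T) := hYc.add hu_cont
  have hu_nonneg : ∀ t ∈ Set.Icc 0 T, 0 ≤ u t := by
    intro t ht
    exact intervalIntegral.integral_nonneg ht.1
      fun s hs => hZ_nonneg s (hsubIcc t ht hs)
  have hV_nonneg : ∀ t ∈ Set.Icc 0 T, 0 ≤ V t :=
    fun t ht => add_nonneg (hY_nonneg t ht) (hu_nonneg t ht)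
  have hφ_nonneg : ∀ t ∈ Set.Icc 0 T, 0 ≤ φ t := by
    intro t ht
    have := hη_nonneg t ht
    have := hγ_nonneg t ht
    have : 0 ≤ A ^ 2 * T := by positivity
    simp only [hφ_def]
    nlinarith [hη_nonneg t ht, hγ_nonneg t ht]
  have hφ_int : IntervalIntegrable φ volume 0 T :=
    hγ_int.add (hη_int.const_mul _)
  have hφV_int : IntervalIntegrable (fun s => φ s * V s) volume 0 T :=
    hφ_int.mul_continuousOn (by rwa [Set.uIcc_of_le hT])
  -- X s ^ 2 ≤ A^2 * T * u s
  have hX2 : ∀ s ∈ Set.Icc 0 T, X s ^ 2 ≤ A ^ 2 * T * u s := by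
    intro s hs
    set a : ℝ := ∫ r in (0:ℝ)..s, Real.sqrt (Z r) with ha_def
    have ha0 : 0 ≤ a :=
      intervalIntegral.integral_nonneg hs.1 fun r _ => Real.sqrt_nonneg _
    have hXa : X s ≤ A * a := by
      rw [hX_ac s hs, hX0, zero_add, ha_def, ← intervalIntegral.integral_const_mul]
      apply intervalIntegral.integral_mono_ae_restrict hs.1
        (hX'_int.mono_set (hsub s hs))
        ((hsqrtZ_int.mono_set (hsub s hs)).const_mul A)
      exact ae_restrict_of_ae_restrict_of_subset (hsubIcc s hs) hODE₁
    have hu0 : 0 ≤ u s := hu_nonneg s hs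
    have haud : a ^ 2 ≤ s * u s := by
      have hkey : ∀ ε : ℝ, 0 < ε → 2 * ε * a ≤ ε ^ 2 * s + u s := by
        intro ε hε
        have hpt : ∀ r ∈ Set.Icc 0 s, 2 * ε * Real.sqrt (Z r) ≤ ε ^ 2 + Z r := by
          intro r hr
          nlinarith [sq_nonneg (Real.sqrt (Z r) - ε),
            Real.sq_sqrt (hZ_nonneg r (hsubIcc s hs hr)), Real.sqrt_nonneg (Z r)]
        have hmono := intervalIntegral.integral_mono_on hs.1
          ((hsqrtZ_int.mono_set (hsub s hs)).const_mul (2 * ε))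
          ((intervalIntegrable_const (c := ε ^ 2)).add (hZ_int.mono_set (hsub s hs)))
          hpt
        rw [intervalIntegral.integral_const_mul,
          intervalIntegral.integral_add (intervalIntegrable_const (c := ε ^ 2))
            (hZ_int.mono_set (hsub s hs)),
          intervalIntegral.integral_const] at hmono
        simp only [smul_eq_mul, sub_zero] at hmono
        calc 2 * ε * a = 2 * ε * a := rfl
          _ ≤ s * ε ^ 2 + u s := hmono
          _ = ε ^ 2 * s + u s := by ring
      rcases eq_or_lt_of_le ha0 with h | h
      · rw [← h]
        simp only [ne_eq, OfNat.ofNat_ne_zero, not_false_eq_true, zero_pow]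
        exact mul_nonneg hs.1 hu0
      · have hs0 : 0 < s := by
          rcases eq_or_lt_of_le hs.1 with h0 | h0
          · exfalso
            have : a = 0 := by rw [ha_def, ← h0, intervalIntegral.integral_same]
            rw [this] at h; exact lt_irrefl 0 h
          · exact h0
        have hk := hkey (a / s) (div_pos h hs0)
        have key2 : 2 * a ^ 2 ≤ a ^ 2 + u s * s := by
          have h3 := mul_le_mul_of_nonneg_right hk hs0.le
          calc 2 * a ^ 2 = (2 * (a / s) * a) * s := by field_simp
            _ ≤ ((a / s) ^ 2 * s + u s) * s := h3
            _ = a ^ 2 + u s * s := by field_simp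
        nlinarith
    have hXa2 : X s ^ 2 ≤ (A * a) ^ 2 := by
      have h1 := hX_nonneg s hs
      nlinarith [mul_nonneg hA.le ha0]
    calc X s ^ 2 ≤ (A * a) ^ 2 := hXa2
      _ = A ^ 2 * a ^ 2 := by ring
      _ ≤ A ^ 2 * (s * u s) := by nlinarith [sq_nonneg A]
      _ ≤ A ^ 2 * T * u s := by
          nlinarith [mul_nonneg (mul_nonneg (sq_nonneg A) (sub_nonneg.2 hs.2)) hu0]
  -- key Grönwall inequality
  have hkeyV : ∀ t ∈ Set.Icc 0 T, V t ≤ ∫ s in (0:ℝ)..t, φ s * V s := by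
    intro t ht
    have e1 : V t = ∫ s in (0:ℝ)..t, (Y' s + Z s) := by
      rw [intervalIntegral.integral_add (hY'_int.mono_set (hsub t ht))
        (hZ_int.mono_set (hsub t ht))]
      show Y t + u t = _
      rw [hY_ac t ht, hY0, zero_add]
    have e2 : (∫ s in (0:ℝ)..t, (Y' s + Z s))
        ≤ ∫ s in (0:ℝ)..t, (γ s * Y s + η s * X s ^ 2) := by
      apply intervalIntegral.integral_mono_ae_restrict ht.1
        ((hY'_int.mono_set (hsub t ht)).add (hZ_int.mono_set (hsub t ht)))
        ((hγY_int.mono_set (hsub t ht)).add (hηX2_int.mono_set (hsub t ht)))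
      exact ae_restrict_of_ae_restrict_of_subset (hsubIcc t ht) hODE₂
    have e3 : (∫ s in (0:ℝ)..t, (γ s * Y s + η s * X s ^ 2))
        ≤ ∫ s in (0:ℝ)..t, φ s * V s := by
      apply intervalIntegral.integral_mono_on ht.1
        ((hγY_int.mono_set (hsub t ht)).add (hηX2_int.mono_set (hsub t ht)))
        (hφV_int.mono_set (hsub t ht))
      intro s hs
      have hsT : s ∈ Set.Icc 0 T := hsubIcc t ht hs
      have h1 : γ s * Y s ≤ γ s * V s :=
        mul_le_mul_of_nonneg_left (by simp only [hV_def]; linarith [hu_nonneg s hsT])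
          (hγ_nonneg s hsT)
      have h2 : η s * X s ^ 2 ≤ A ^ 2 * T * η s * V s := by
        have h21 : X s ^ 2 ≤ A ^ 2 * T * V s := by
          have := hX2 s hsT
          have hATnn : 0 ≤ A ^ 2 * T := by positivity
          have : A ^ 2 * T * u s ≤ A ^ 2 * T * V s := by
            apply mul_le_mul_of_nonneg_left _ hATnn
            simp only [hV_def]
            linarith [hY_nonneg s hsT]
          linarith [hX2 s hsT]
        calc η s * X s ^ 2 ≤ η s * (A ^ 2 * T * V s) :=
              mul_le_mul_of_nonneg_left h21 (hη_nonneg s hsT)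
          _ = A ^ 2 * T * η s * V s := by ring
      calc γ s * Y s + η s * X s ^ 2 ≤ γ s * V s + A ^ 2 * T * η s * V s := by linarith
        _ = φ s * V s := by simp only [hφ_def]; ring
    linarith [e1 ▸ e2.trans e3]
  -- apply Grönwall
  have hV0 : ∀ t ∈ Set.Icc 0 T, V t = 0 :=
    gronwall_zero_aux T hT V φ hV_cont hV_nonneg hφ_nonneg hφ_int hφV_int hkeyV
  have hY0' : ∀ t ∈ Set.Icc 0 T, Y t = 0 := by
    intro t ht
    have := hV0 t ht
    have h1 := hu_nonneg t ht
    have h2 := hY_nonneg t ht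
    simp only [hV_def] at this
    linarith
  have hu0' : ∀ t ∈ Set.Icc 0 T, u t = 0 := by
    intro t ht
    have := hV0 t ht
    have h1 := hu_nonneg t ht
    have h2 := hY_nonneg t ht
    simp only [hV_def] at this
    linarith
  -- Z = 0 a.e.
  have hrestrict_eq : volume.restrict (Set.Ioc (0:ℝ) T) = volume.restrict (Set.Icc 0 T) :=
    Measure.restrict_congr_set Ioc_ae_eq_Icc
  have hZae : ∀ᵐ t ∂(volume.restrict (Set.Icc 0 T)), Z t = 0 := by
    have hZT : (∫ t in Set.Ioc (0:ℝ) T, Z t) = 0 := by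
      have h := hu0' T ⟨hT, le_refl T⟩
      simp only [hu_def] at h
      rwa [intervalIntegral.integral_of_le hT] at h
    have hnn : 0 ≤ᵐ[volume.restrict (Set.Ioc (0:ℝ) T)] Z := by
      filter_upwards [ae_restrict_mem measurableSet_Ioc] with t ht
      exact hZ_nonneg t ⟨ht.1.le, ht.2⟩
    have hZint' : Integrable Z (volume.restrict (Set.Ioc (0:ℝ) T)) := hZ_int.1
    have := (integral_eq_zero_iff_of_nonneg_ae hnn hZint').1 hZT
    rw [hrestrict_eq] at this
    filter_upwards [this] with t ht
    exact ht
  -- X = 0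
  have hX0' : ∀ t ∈ Set.Icc 0 T, X t = 0 := by
    intro t ht
    have hX'le : ∀ᵐ s ∂(volume.restrict (Set.Icc 0 T)), X' s ≤ 0 := by
      filter_upwards [hODE₁, hZae] with s h1 h2
      rw [h2, Real.sqrt_zero, mul_zero] at h1
      exact h1
    have hle : (∫ s in (0:ℝ)..t, X' s) ≤ ∫ s in (0:ℝ)..t, (0:ℝ) := by
      apply intervalIntegral.integral_mono_ae_restrict ht.1
        (hX'_int.mono_set (hsub t ht)) intervalIntegrable_const
      exact ae_restrict_of_ae_restrict_of_subset (hsubIcc t ht) hX'le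
    simp only [intervalIntegral.integral_zero] at hle
    have := hX_ac t ht
    rw [hX0, zero_add] at this
    exact le_antisymm (this ▸ hle) (hX_nonneg t ht)
  exact ⟨fun t ht => ⟨hX0' t ht, hY0' t ht⟩, hZae⟩
end
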